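/- Suppose there exist an integer relative Heffter array A = H_k(n;k) (with entries viewed as integers) and an n×n shiftable partially filled integer array B, with h a positive even integer, such that: (1) each row and each column of B contains exactly h filled cells; (2) the entries of B have pairwise distinct absolute values and supp(B) = [1, (h/2)(2n+1)] \ T, where T = {(2n+1), 2(2n+1), ..., (h/2)(2n+1)} if k is even, and T = {(n+1), (n+1)+(2n+1), ..., (n+1)+((h−2)/2)(2n+1)} if k is odd; (3) the elements in every row and every column of B sum to 0 in Z; (4) skel(A) ∩ skel(B) = ∅. Then there exists an integer relative Heffter array H_{k+h}(n;k+h). -/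

import Mathlib

/-- Number of filled cells in row `i` of the partially filled array `A`. -/
def rowFilled {m n : ℕ} (A : Fin m → Fin n → Option ℤ) (i : Fin m) : ℕ :=
  (Finset.univ.filter fun j => (A i j).isSome).card

/-- Number of filled cells in column `j` of the partially filled array `A`. -/
def colFilled {m n : ℕ} (A : Fin m → Fin n → Option ℤ) (j : Fin n) : ℕ :=
  (Finset.univ.filter fun i => (A i j).isSome).card

/-- Sum of the entries of row `i` (empty cells count as `0`). -/
def rowSum {m n : ℕ} (A : Fin m → Fin n → Option ℤ) (i : Fin m) : ℤ :=
  ∑ j, (A i j).getD 0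

/-- Sum of the entries of column `j` (empty cells count as `0`). -/
def colSum {m n : ℕ} (A : Fin m → Fin n → Option ℤ) (j : Fin n) : ℤ :=
  ∑ i, (A i j).getD 0

/-- `A` is a square integer relative Heffter array `H_t(n;k)`, written with
integer entries: each row and each column has exactly `k` filled cells, each
row and column sums to `0` in `ℤ`, every entry `x` satisfies
`1 ≤ |x| ≤ ⌊(2nk+t)/2⌋` with `|x|` not a multiple of `(2nk+t)/t` (i.e. the
class of `x` avoids the subgroup `J` of order `t`), and for every admissible
absolute value exactly one cell contains it (up to sign), so that every class
of `ZMod (2nk+t) \ J` is represented exactly once up to sign. -/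
def IsIntHeffter (n k t : ℕ) (A : Fin n → Fin n → Option ℤ) : Prop :=
  (∀ i, rowFilled A i = k) ∧
  (∀ j, colFilled A j = k) ∧
  (∀ i, rowSum A i = 0) ∧
  (∀ j, colSum A j = 0) ∧
  (∀ i j x, A i j = some x →
    1 ≤ x.natAbs ∧ x.natAbs ≤ (2 * n * k + t) / 2 ∧
      ¬ ((2 * n * k + t) / t ∣ x.natAbs)) ∧
  (∀ x : ℕ, 1 ≤ x → x ≤ (2 * n * k + t) / 2 → ¬ ((2 * n * k + t) / t ∣ x) →
    ∃! p : Fin n × Fin n, A p.1 p.2 = some (x : ℤ) ∨ A p.1 p.2 = some (-(x : ℤ)))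

/-- A square partially filled integer array is shiftable if every row and every
column contains as many positive entries as negative entries. -/
def Shiftable {n : ℕ} (A : Fin n → Fin n → Option ℤ) : Prop :=
  (∀ i : Fin n, (Finset.univ.filter fun j => 0 < (A i j).getD 0).card =
      (Finset.univ.filter fun j => (A i j).getD 0 < 0).card) ∧
  (∀ j : Fin n, (Finset.univ.filter fun i => 0 < (A i j).getD 0).card =
      (Finset.univ.filter fun i => (A i j).getD 0 < 0).card)

/-- `A` is cyclically `k`-diagonal: its filled cells are exactly those of `k`
consecutive cyclic diagonals (cell `(r,c)` lies on diagonal `r - c (mod n)`). -/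
def CycDiagonal {n : ℕ} (k : ℕ) (A : Fin n → Fin n → Option ℤ) : Prop :=
  ∃ d : ZMod n, ∀ r c : Fin n, (A r c).isSome ↔
    ∃ j : ℕ, j < k ∧ ((r : ℕ) : ZMod n) - ((c : ℕ) : ZMod n) = d + (j : ZMod n)

/-- `A` (of size `N` with `s ∣ N`) is cyclically `(s,k)`-diagonal: it is obtained
from a cyclically `k`-diagonal `(N/s) × (N/s)` array by blowing up each cell into
an `s × s` block and then cyclically shifting the columns by some offset. -/
def CycSKDiagonal (s k : ℕ) {N : ℕ} (A : Fin N → Fin N → Option ℤ) : Prop :=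
  s ∣ N ∧ ∃ (d : ZMod (N / s)) (off : ℕ), ∀ r c : Fin N, (A r c).isSome ↔
    ∃ j : ℕ, j < k ∧
      (((r : ℕ) / s : ℕ) : ZMod (N / s)) - (((((c : ℕ) + off) % N) / s : ℕ) : ZMod (N / s))
        = d + (j : ZMod (N / s))

/-- The support of a partially filled integer array: the set of absolute values
of its entries. -/
def suppSet {m n : ℕ} (A : Fin m → Fin n → Option ℤ) : Set ℕ :=
  {a | ∃ i j x, A i j = some x ∧ x.natAbs = a}

/-- The entries of `A` have pairwise distinct absolute values. -/
def DistinctAbs {m n : ℕ} (A : Fin m → Fin n → Option ℤ) : Prop :=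
  ∀ i j i' j' x y, A i j = some x → A i' j' = some y →
    x.natAbs = y.natAbs → (i, j) = (i', j')

/-- The skeleton of a partially filled array: the set of its filled positions. -/
def skel {m n : ℕ} (A : Fin m → Fin n → Option ℤ) : Set (Fin m × Fin n) :=
  {p | (A p.1 p.2).isSome}

lemma key_even (n h a MA k' : ℕ) (hMA : MA = k' * (2*n+1))
    (ha1 : 1 ≤ a) (ha2 : a ≤ (h/2)*(2*n+1)) :
    ((2*n+1) ∣ a + MA) ↔ ∃ c : ℕ, 1 ≤ c ∧ c ≤ h/2 ∧ a = c*(2*n+1) := by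
  constructor
  · intro hd
    have hdMA : (2*n+1) ∣ MA := ⟨k', by rw [hMA, mul_comm]⟩
    rw [Nat.add_comm a MA] at hd
    have hda : (2*n+1) ∣ a := (Nat.dvd_add_right hdMA).mp hd
    obtain ⟨c, hc⟩ := hda
    refine ⟨c, ?_, ?_, by rw [hc, mul_comm]⟩
    · rcases Nat.eq_zero_or_pos c with h0 | h0
      · subst h0; omega
      · exact h0
    · have : (2*n+1) * c ≤ (2*n+1) * (h/2) := by
        rw [← hc]; rw [mul_comm (2*n+1)] ; exact ha2
      exact Nat.le_of_mul_le_mul_left this (by omega)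
  · rintro ⟨c, hc1, hc2, rfl⟩
    exact ⟨c + k', by rw [hMA]; ring⟩

lemma key_odd (n h a MA k' : ℕ) (hMA : MA = 2*k'*n + k' + n)
    (hhe : h % 2 = 0)
    (ha1 : 1 ≤ a) (ha2 : a ≤ (h/2)*(2*n+1)) :
    ((2*n+1) ∣ a + MA) ↔ ∃ c : ℕ, c ≤ (h-2)/2 ∧ a = (n+1) + c*(2*n+1) := by
  have hh2 : 1 ≤ h / 2 := by
    rcases Nat.eq_zero_or_pos (h/2) with h0 | h0
    · rw [h0, zero_mul] at ha2; omega
    · exact h0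
  constructor
  · intro hd
    obtain ⟨m, hm⟩ := hd
    have hm' : k' + 1 ≤ m := by
      by_contra hcon
      push_neg at hcon
      have : (2*n+1) * m ≤ (2*n+1) * k' := Nat.mul_le_mul_left _ (by omega)
      have e : (2*n+1) * k' = 2*k'*n + k' := by ring
      omega
    set c := m - (k' + 1) with hc
    have hmc : m = k' + 1 + c := by omega
    have e2 : (2*n+1)*(k'+1+c) = (2*k'*n + k' + n) + (n+1) + c*(2*n+1) := by ring
    rw [hmc] at hm
    refine ⟨c, ?_, by omega⟩
    have ha : a = (n+1) + c*(2*n+1) := by omega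
    by_contra hcon
    push_neg at hcon
    have hch : h/2 ≤ c := by omega
    have : (h/2)*(2*n+1) ≤ c*(2*n+1) := Nat.mul_le_mul_right _ hch
    omega
  · rintro ⟨c, hc, rfl⟩
    refine ⟨k' + 1 + c, ?_⟩
    have e2 : (2*n+1)*(k'+1+c) = (2*k'*n + k' + n) + (n+1) + c*(2*n+1) := by ring
    omega


/-- extension theorem: from an integer `H_k(n;k)` and a shiftable
array `B` with `h` filled cells per row/column, row/column sums zero, support
`[1,(h/2)(2n+1)] \ T` and skeleton disjoint from that of `A`, one gets an
integer `H_{k+h}(n;k+h)`. -/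
theorem intHeffter_extension (n k h : ℕ) (hh : 0 < h) (hhe : Even h)
    (A B : Fin n → Fin n → Option ℤ)
    (hA : IsIntHeffter n k k A)
    (hBshift : Shiftable B)
    (hBrow : ∀ i, rowFilled B i = h) (hBcol : ∀ j, colFilled B j = h)
    (hBdist : DistinctAbs B)
    (hBsupp : suppSet B =
      {a : ℕ | (1 ≤ a ∧ a ≤ (h / 2) * (2 * n + 1)) ∧
        a ∉ (if k % 2 = 0 then
              {a : ℕ | ∃ c : ℕ, 1 ≤ c ∧ c ≤ h / 2 ∧ a = c * (2 * n + 1)}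
            else
              {a : ℕ | ∃ c : ℕ, c ≤ (h - 2) / 2 ∧ a = (n + 1) + c * (2 * n + 1)} : Set ℕ)})
    (hBrsum : ∀ i, rowSum B i = 0) (hBcsum : ∀ j, colSum B j = 0)
    (hskel : skel A ∩ skel B = ∅) :
    ∃ C : Fin n → Fin n → Option ℤ, IsIntHeffter n (k + h) (k + h) C := by
  classical
  obtain ⟨hArow, hAcol, hArsum, hAcsum, hAmem, hAuniq⟩ := hA
  obtain ⟨hBshr, hBshc⟩ := hBshift
  have hhmod : h % 2 = 0 := Nat.even_iff.mp hhe
  set MA : ℕ := (2*n*k+k)/2 with hMAdef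
  set T : Set ℕ := (if k % 2 = 0 then
              {a : ℕ | ∃ c : ℕ, 1 ≤ c ∧ c ≤ h / 2 ∧ a = c * (2 * n + 1)}
            else
              {a : ℕ | ∃ c : ℕ, c ≤ (h - 2) / 2 ∧ a = (n + 1) + c * (2 * n + 1)} : Set ℕ)
    with hTdef
  -- key characterization
  have hkey : ∀ a : ℕ, 1 ≤ a → a ≤ (h/2)*(2*n+1) → ((2*n+1) ∣ a + MA ↔ a ∈ T) := by
    intro a ha1 ha2
    rcases Nat.even_or_odd k with hke | hko
    · obtain ⟨k₀, hk₀⟩ := hke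
      have e : 2*n*k+k = 2*(k₀*(2*n+1)) := by subst hk₀; ring
      have hMAe : MA = k₀ * (2*n+1) := by rw [hMAdef, e, Nat.mul_div_cancel_left _ (by norm_num)]
      rw [hTdef, if_pos (by omega : k % 2 = 0)]
      exact key_even n h a MA k₀ hMAe ha1 ha2
    · obtain ⟨k₀, hk₀⟩ := hko
      have e : 2*n*k+k = 2*(2*k₀*n + k₀ + n) + 1 := by subst hk₀; ring
      have hMAe : MA = 2*k₀*n + k₀ + n := by rw [hMAdef, e]; omega
      rw [hTdef, if_neg (by omega : ¬ k % 2 = 0)]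
      exact key_odd n h a MA k₀ hMAe hhmod ha1 ha2
  -- bound equality
  have hBT : (2*n*(k+h)+(k+h))/2 = MA + (h/2)*(2*n+1) := by
    obtain ⟨m, hm⟩ := hhe
    have e1 : 2*n*(k+h)+(k+h) = (2*n*k+k) + 2*(m*(2*n+1)) := by subst hm; ring
    have e2 : (h/2)*(2*n+1) = m*(2*n+1) := by
      have : h/2 = m := by omega
      rw [this]
    rw [hMAdef, e1, e2]; omega
  have hdivT : (2*n*(k+h)+(k+h))/(k+h) = 2*n+1 := by
    have e : 2*n*(k+h)+(k+h) = (k+h)*(2*n+1) := by ring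
    rw [e, Nat.mul_div_cancel_left _ (by omega)]
  have hdivA : 0 < k → (2*n*k+k)/k = 2*n+1 := by
    intro hk
    have e : 2*n*k+k = k*(2*n+1) := by ring
    rw [e, Nat.mul_div_cancel_left _ hk]
  -- disjointness
  have hdisj : ∀ i j, (A i j).isSome → B i j = none := by
    intro i j hij
    by_contra hBn
    have hBs : (B i j).isSome := by
      cases hB : B i j
      · exact absurd hB hBn
      · simp
    have : (⟨i, j⟩ : Fin n × Fin n) ∈ skel A ∩ skel B := ⟨hij, hBs⟩
    rw [hskel] at this
    exact this
  -- membership facts for B entries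
  have hsuppIff := Set.ext_iff.mp hBsupp
  have hBmem : ∀ i j y, B i j = some y →
      (1 ≤ y.natAbs ∧ y.natAbs ≤ (h/2)*(2*n+1)) ∧ y.natAbs ∉ T := by
    intro i j y hy
    exact (hsuppIff y.natAbs).mp ⟨i, j, y, hy, rfl⟩
  have hBne : ∀ i j y, B i j = some y → y ≠ 0 := by
    intro i j y hy h0
    have := (hBmem i j y hy).1.1
    subst h0
    simp at this
  -- the shift
  set shift : ℤ → ℤ := fun x => if 0 < x then x + MA else x - MA with hshift
  have hshiftAbs : ∀ y : ℤ, (shift y).natAbs = y.natAbs + MA := by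
    intro y
    rw [hshift]
    simp only []
    split <;> omega
  -- the new array
  set C : Fin n → Fin n → Option ℤ :=
    fun i j => if (A i j).isSome then A i j else (B i j).map shift with hC
  have hCsome : ∀ i j, (C i j).isSome ↔ ((A i j).isSome ∨ (B i j).isSome) := by
    intro i j
    rw [hC]
    by_cases hij : (A i j).isSome
    · simp [hij]
    · simp [hij]
  -- C entries come from A or shifted B
  have hCcases : ∀ i j x, C i j = some x →
      (A i j = some x) ∨ (∃ y, B i j = some y ∧ shift y = x) := by
    intro i j x hx
    rw [hC] at hx
    by_cases hij : (A i j).isSome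
    · simp only [hij, if_true] at hx; exact Or.inl hx
    · simp only [hij, Bool.false_eq_true, if_false] at hx
      exact Or.inr (Option.map_eq_some_iff.mp hx)
  -- A entries survive in C
  have hCA : ∀ i j, (A i j).isSome → C i j = A i j := by
    intro i j hij; rw [hC]; simp [hij]
  have hCB : ∀ i j y, B i j = some y → C i j = some (shift y) := by
    intro i j y hy
    have hAn : ¬ (A i j).isSome := by
      intro hs
      have := hdisj i j hs
      rw [this] at hy
      cases hy
    rw [hC]; simp [hAn, hy]
  -- k positive whenever A has an entry
  have hApos : ∀ i j x, A i j = some x → 0 < k := by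
    intro i j x hx
    rw [← hArow i]
    unfold rowFilled
    exact Finset.card_pos.mpr ⟨j, by simp [hx]⟩
  refine ⟨C, ?_, ?_, ?_, ?_, ?_, ?_⟩
  · -- rows filled
    intro i
    unfold rowFilled
    have hfe : (Finset.univ.filter fun j => (C i j).isSome) =
        (Finset.univ.filter fun j => (A i j).isSome) ∪
        (Finset.univ.filter fun j => (B i j).isSome) := by
      ext j
      simp only [Finset.mem_filter, Finset.mem_union, Finset.mem_univ, true_and]
      exact hCsome i j
    rw [hfe, Finset.card_union_of_disjoint]
    · have h1 := hArow i; have h2 := hBrow i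
      unfold rowFilled at h1 h2
      omega
    · rw [Finset.disjoint_left]
      intro j hj hj'
      simp only [Finset.mem_filter, Finset.mem_univ, true_and] at hj hj'
      rw [hdisj i j hj] at hj'
      simp at hj'
  · -- cols filled
    intro j
    unfold colFilled
    have hfe : (Finset.univ.filter fun i => (C i j).isSome) =
        (Finset.univ.filter fun i => (A i j).isSome) ∪
        (Finset.univ.filter fun i => (B i j).isSome) := by
      ext i
      simp only [Finset.mem_filter, Finset.mem_union, Finset.mem_univ, true_and]
      exact hCsome i j
    rw [hfe, Finset.card_union_of_disjoint]
    · have h1 := hAcol j; have h2 := hBcol j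
      unfold colFilled at h1 h2
      omega
    · rw [Finset.disjoint_left]
      intro i hi hi'
      simp only [Finset.mem_filter, Finset.mem_univ, true_and] at hi hi'
      rw [hdisj i j hi] at hi'
      simp at hi'
  · -- row sums
    intro i
    have cell : ∀ j, (C i j).getD 0 = (A i j).getD 0 + (B i j).getD 0
        + (if 0 < (B i j).getD 0 then (MA:ℤ) else 0)
        - (if (B i j).getD 0 < 0 then (MA:ℤ) else 0) := by
      intro j
      by_cases hij : (A i j).isSome
      · obtain ⟨a, ha⟩ := Option.isSome_iff_exists.mp hij
        have hB := hdisj i j hij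
        rw [hCA i j hij, ha, hB]
        simp
      · cases hB : B i j with
        | none =>
          rw [hC]; simp [hij, hB, Option.not_isSome_iff_eq_none.mp hij]
        | some y =>
          have hy0 := hBne i j y hB
          rw [hCB i j y hB, hshift]
          simp only [Option.getD_some, Option.not_isSome_iff_eq_none.mp hij,
            Option.getD_none]
          split_ifs <;> omega
    show (∑ j, (C i j).getD 0) = 0
    rw [Finset.sum_congr rfl (fun j _ => cell j)]
    have e1 : ∑ j, ((A i j).getD 0 + (B i j).getD 0
        + (if 0 < (B i j).getD 0 then (MA:ℤ) else 0)
        - (if (B i j).getD 0 < 0 then (MA:ℤ) else 0))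
      = (∑ j, (A i j).getD 0) + (∑ j, (B i j).getD 0)
        + (∑ j, if 0 < (B i j).getD 0 then (MA:ℤ) else 0)
        - (∑ j, if (B i j).getD 0 < 0 then (MA:ℤ) else 0) := by
      rw [Finset.sum_sub_distrib, Finset.sum_add_distrib, Finset.sum_add_distrib]
    rw [e1]
    have e2 : (∑ j, if 0 < (B i j).getD 0 then (MA:ℤ) else 0)
        = ((Finset.univ.filter fun j => 0 < (B i j).getD 0).card : ℤ) * MA := by
      rw [← Finset.sum_filter, Finset.sum_const, nsmul_eq_mul]
    have e3 : (∑ j, if (B i j).getD 0 < 0 then (MA:ℤ) else 0)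
        = ((Finset.univ.filter fun j => (B i j).getD 0 < 0).card : ℤ) * MA := by
      rw [← Finset.sum_filter, Finset.sum_const, nsmul_eq_mul]
    have hram := hArsum i
    have hrbm := hBrsum i
    unfold rowSum at hram hrbm
    rw [e2, e3, hram, hrbm, hBshr i]
    ring
  · -- col sums
    intro j
    have cell : ∀ i, (C i j).getD 0 = (A i j).getD 0 + (B i j).getD 0
        + (if 0 < (B i j).getD 0 then (MA:ℤ) else 0)
        - (if (B i j).getD 0 < 0 then (MA:ℤ) else 0) := by
      intro i
      by_cases hij : (A i j).isSome
      · obtain ⟨a, ha⟩ := Option.isSome_iff_exists.mp hij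
        have hB := hdisj i j hij
        rw [hCA i j hij, ha, hB]
        simp
      · cases hB : B i j with
        | none =>
          rw [hC]; simp [hij, hB, Option.not_isSome_iff_eq_none.mp hij]
        | some y =>
          have hy0 := hBne i j y hB
          rw [hCB i j y hB, hshift]
          simp only [Option.getD_some, Option.not_isSome_iff_eq_none.mp hij,
            Option.getD_none]
          split_ifs <;> omega
    show (∑ i, (C i j).getD 0) = 0
    rw [Finset.sum_congr rfl (fun i _ => cell i)]
    have e1 : ∑ i, ((A i j).getD 0 + (B i j).getD 0
        + (if 0 < (B i j).getD 0 then (MA:ℤ) else 0)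
        - (if (B i j).getD 0 < 0 then (MA:ℤ) else 0))
      = (∑ i, (A i j).getD 0) + (∑ i, (B i j).getD 0)
        + (∑ i, if 0 < (B i j).getD 0 then (MA:ℤ) else 0)
        - (∑ i, if (B i j).getD 0 < 0 then (MA:ℤ) else 0) := by
      rw [Finset.sum_sub_distrib, Finset.sum_add_distrib, Finset.sum_add_distrib]
    rw [e1]
    have e2 : (∑ i, if 0 < (B i j).getD 0 then (MA:ℤ) else 0)
        = ((Finset.univ.filter fun i => 0 < (B i j).getD 0).card : ℤ) * MA := by
      rw [← Finset.sum_filter, Finset.sum_const, nsmul_eq_mul]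
    have e3 : (∑ i, if (B i j).getD 0 < 0 then (MA:ℤ) else 0)
        = ((Finset.univ.filter fun i => (B i j).getD 0 < 0).card : ℤ) * MA := by
      rw [← Finset.sum_filter, Finset.sum_const, nsmul_eq_mul]
    have hcam := hAcsum j
    have hcbm := hBcsum j
    unfold colSum at hcam hcbm
    rw [e2, e3, hcam, hcbm, hBshc j]
    ring
  · -- entry bounds
    intro i j x hx
    rcases hCcases i j x hx with hAx | ⟨y, hBy, rfl⟩
    · obtain ⟨h1, h2, h3⟩ := hAmem i j x hAx
      have hk := hApos i j x hAx
      rw [hdivA hk] at h3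
      refine ⟨h1, ?_, ?_⟩
      · rw [hBT]; omega
      · rw [hdivT]; exact h3
    · obtain ⟨⟨hy1, hy2⟩, hyT⟩ := hBmem i j y hBy
      rw [hshiftAbs]
      refine ⟨by omega, ?_, ?_⟩
      · rw [hBT]; omega
      · rw [hdivT]
        intro hdvd
        exact hyT ((hkey y.natAbs hy1 hy2).mp hdvd)
  · -- uniqueness
    intro x hx1 hx2 hx3
    rw [hdivT] at hx3
    rw [hBT] at hx2
    by_cases hxM : x ≤ MA
    · -- comes from A
      have hk : 0 < k := by
        rcases Nat.eq_zero_or_pos k with h0 | h0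
        · exfalso; subst h0; simp at hMAdef; omega
        · exact h0
      rw [hdivA hk] at hAuniq
      obtain ⟨p, hp, hpu⟩ := hAuniq x hx1 hxM hx3
      have hs : (A p.1 p.2).isSome := by rcases hp with hp | hp <;> simp [hp]
      refine ⟨p, ?_, ?_⟩
      · show C p.1 p.2 = some (x:ℤ) ∨ C p.1 p.2 = some (-(x:ℤ))
        rw [hCA p.1 p.2 hs]; exact hp
      · intro q hq
        have key : ∀ z : ℤ, C q.1 q.2 = some z → z.natAbs = x → q = p := by
          intro z hz hzabs
          rcases hCcases q.1 q.2 z hz with hAq | ⟨y, hBy, hsy⟩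
          · apply hpu
            rcases Int.natAbs_eq z with he | he
            · left; rw [hAq]; congr 1; omega
            · right; rw [hAq]; congr 1; omega
          · exfalso
            have := hshiftAbs y
            rw [hsy, hzabs] at this
            have hy1 := (hBmem q.1 q.2 y hBy).1.1
            omega
        rcases hq with hq | hq
        · exact key _ hq (by simp)
        · exact key _ hq (by simp)
    · -- comes from B
      push_neg at hxM
      have ha1 : 1 ≤ x - MA := by omega
      have ha2 : x - MA ≤ (h/2)*(2*n+1) := by omega
      have haT : x - MA ∉ T := by
        intro hT
        have hd := (hkey (x - MA) ha1 ha2).mpr hT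
        have : x - MA + MA = x := by omega
        rw [this] at hd
        exact hx3 hd
      obtain ⟨i, j, y, hBy, hyabs⟩ := (hsuppIff (x - MA)).mpr ⟨⟨ha1, ha2⟩, haT⟩
      have habs : (shift y).natAbs = x := by rw [hshiftAbs]; omega
      refine ⟨⟨i, j⟩, ?_, ?_⟩
      · show C i j = some (x:ℤ) ∨ C i j = some (-(x:ℤ))
        rcases Int.natAbs_eq (shift y) with he | he
        · left; rw [hCB i j y hBy, he, habs]
        · right; rw [hCB i j y hBy, he, habs]
      · intro q hq
        have key : ∀ z : ℤ, C q.1 q.2 = some z → z.natAbs = x → q = ⟨i, j⟩ := by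
          intro z hz hzabs
          rcases hCcases q.1 q.2 z hz with hAq | ⟨y', hBy', hsy'⟩
          · exfalso
            have := (hAmem q.1 q.2 z hAq).2.1
            omega
          · have := hshiftAbs y'
            rw [hsy', hzabs] at this
            have heq : y'.natAbs = y.natAbs := by omega
            have := hBdist q.1 q.2 i j y' y hBy' hBy heq
            rw [Prod.mk.injEq] at this
            exact Prod.ext this.1 this.2
        rcases hq with hq | hq
        · exact key _ hq (by simp)
        · exact key _ hq (by simp)
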